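/- Let (Ω, P) be a probability space and let X : Fin 2 × Fin 2 → Fin N → Ω → ℝ be a mutually independent family of random variables, each taking values in {−1, 1}, with common mean μ(i,j) within each family (i,j). Let S = μ(0,0) + μ(1,0) + μ(0,1) − μ(1,1) and S̄ = m(0,0) + m(1,0) + m(0,1) − m(1,1) with m(i,j) = (1/N) ∑ₖ X (i,j) k. If additionally S ≥ 2, then for every ε > 0, P[|S̄ − S| > ε] ≤ 3/(N ε²); in particular N ≥ 3/(δ ε²) suffices to guarantee P[|S̄ − S| > ε] ≤ δ for any 0 < δ < 1. -/

import Mathlib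

open MeasureTheory ProbabilityTheory Finset

noncomputable section

/-- Empirical mean `m(i,j) = (1/N) ∑ₖ X (i,j) k`. -/
def empMean {Ω : Type*} {N : ℕ} (X : Fin 2 × Fin 2 → Fin N → Ω → ℝ)
    (ij : Fin 2 × Fin 2) (ω : Ω) : ℝ :=
  (1 / N) * ∑ k, X ij k ω

/-- Empirical CHSH estimate `S̄ = m(0,0) + m(1,0) + m(0,1) − m(1,1)`. -/
def SbarEmp {Ω : Type*} {N : ℕ} (X : Fin 2 × Fin 2 → Fin N → Ω → ℝ) (ω : Ω) : ℝ :=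
  empMean X (0, 0) ω + empMean X (1, 0) ω + empMean X (0, 1) ω - empMean X (1, 1) ω

/-- True CHSH value `S = μ(0,0) + μ(1,0) + μ(0,1) − μ(1,1)`. -/
def Strue (μ : Fin 2 × Fin 2 → ℝ) : ℝ := μ (0, 0) + μ (1, 0) + μ (0, 1) - μ (1, 1)

end

/-- Sharpened Chebyshev bound for nonlocal states: if additionally `S ≥ 2`, then for every
`ε > 0`, `P[|S̄ − S| > ε] ≤ 3/(N ε²)`; in particular `N ≥ 3/(δ ε²)` suffices to guarantee
`P[|S̄ − S| > ε] ≤ δ` for any `0 < δ < 1`. -/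
theorem chebyshev_chsh_estimate_nonlocal {Ω : Type*} [MeasurableSpace Ω]
    (P : Measure Ω) [IsProbabilityMeasure P] (N : ℕ) (hN : 0 < N)
    (X : Fin 2 × Fin 2 → Fin N → Ω → ℝ)
    (hmeas : ∀ ij k, Measurable (X ij k))
    (hindep : iIndepFun
      (fun p : (Fin 2 × Fin 2) × Fin N => X p.1 p.2) P)
    (hval : ∀ ij k ω, X ij k ω = 1 ∨ X ij k ω = -1)
    (μ : Fin 2 × Fin 2 → ℝ)
    (hmean : ∀ ij k, ∫ ω, X ij k ω ∂P = μ ij)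
    (hS : Strue μ ≥ 2) :
    (∀ ε : ℝ, 0 < ε →
      (P {ω | ε < |SbarEmp X ω - Strue μ|}).toReal ≤ 3 / (N * ε ^ 2)) ∧
    (∀ ε δ : ℝ, 0 < ε → 0 < δ → δ < 1 →
      (N : ℝ) ≥ 3 / (δ * ε ^ 2) →
      (P {ω | ε < |SbarEmp X ω - Strue μ|}).toReal ≤ δ) := by
  classical
  have hNR : (0 : ℝ) < N := by exact_mod_cast hN
  -- basic facts about the X's
  have hbd : ∀ ij k ω, |X ij k ω| ≤ 1 := by
    intro ij k ω; rcases hval ij k ω with h | h <;> rw [h] <;> norm_num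
  have hmem : ∀ ij k, MemLp (X ij k) 2 P := fun ij k =>
    MemLp.of_bound (hmeas ij k).aestronglyMeasurable 1
      (Filter.Eventually.of_forall fun ω => by simpa using hbd ij k ω)
  have hint : ∀ ij k, Integrable (X ij k) P := fun ij k => (hmem ij k).integrable one_le_two
  -- signs
  set c : Fin 2 × Fin 2 → ℝ := fun ij => if ij = (1, 1) then -1 else 1 with hc
  have hc2 : ∀ ij, c ij ^ 2 = 1 := by
    intro ij; by_cases h : ij = (1, 1) <;> simp [hc, h]
  -- the summands
  set Y : (Fin 2 × Fin 2) × Fin N → Ω → ℝ := fun p ω => c p.1 / N * X p.1 p.2 ω with hY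
  have hYmem : ∀ p, MemLp (Y p) 2 P := fun p => (hmem p.1 p.2).const_mul _
  have hSsum : SbarEmp X = ∑ p : (Fin 2 × Fin 2) × Fin N, Y p := by
    funext ω
    have h1 : ∀ ij : Fin 2 × Fin 2, (∑ k, Y (ij, k) ω) = c ij * empMean X ij ω := by
      intro ij
      simp only [hY, empMean, Finset.mul_sum]
      refine Finset.sum_congr rfl fun k _ => ?_
      ring
    rw [Finset.sum_apply, Fintype.sum_prod_type]
    rw [Finset.sum_congr rfl (fun ij _ => h1 ij)]
    simp only [Fintype.sum_prod_type, Fin.sum_univ_two, hc]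
    norm_num [SbarEmp, Prod.ext_iff]
    ring
  -- Memℒp of SbarEmp
  have hSmem : MemLp (SbarEmp X) 2 P := by
    rw [hSsum]
    exact memLp_finset_sum' _ fun p _ => hYmem p
  -- expectation of SbarEmp
  have hEmp : ∀ ij, ∫ ω, empMean X ij ω ∂P = μ ij := by
    intro ij
    simp only [empMean]
    rw [integral_const_mul, integral_finset_sum _ fun k _ => hint ij k]
    simp only [hmean, Finset.sum_const, Finset.card_univ, Fintype.card_fin, nsmul_eq_mul]
    field_simp
  have hintEmp : ∀ ij, Integrable (fun ω => empMean X ij ω) P := by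
    intro ij
    exact ((integrable_finset_sum _ fun k _ => hint ij k).const_mul _)
  have hE : (∫ ω, SbarEmp X ω ∂P) = Strue μ := by
    have ha : Integrable (fun ω => empMean X (0,0) ω + empMean X (1,0) ω) P :=
      (hintEmp (0,0)).add (hintEmp (1,0))
    have hb : Integrable
        (fun ω => empMean X (0,0) ω + empMean X (1,0) ω + empMean X (0,1) ω) P :=
      ha.add (hintEmp (0,1))
    simp only [SbarEmp]
    rw [integral_sub hb (hintEmp (1,1)), integral_add ha (hintEmp (0,1)),
      integral_add (hintEmp (0,0)) (hintEmp (1,0))]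
    simp [hEmp, Strue]
  -- variance of each X ij k
  have hvarX : ∀ ij k, variance (X ij k) P = 1 - μ ij ^ 2 := by
    intro ij k
    rw [variance_eq_sub (hmem ij k)]
    have h1 : (fun ω => (X ij k ^ 2) ω) = fun _ => (1 : ℝ) := by
      funext ω
      rcases hval ij k ω with h | h <;> simp [h]
    calc (∫ ω, (X ij k ^ 2) ω ∂P) - (∫ ω, X ij k ω ∂P) ^ 2
        = (∫ _ω, (1 : ℝ) ∂P) - μ ij ^ 2 := by rw [h1, hmean]
      _ = 1 - μ ij ^ 2 := by simp
  -- independence of the Y's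
  have hindepY : iIndepFun Y P := by
    have := hindep.comp (fun p (x : ℝ) => c p.1 / N * x)
      (fun p => (measurable_const_mul _))
    exact this
  -- variance of SbarEmp
  have hvarS : variance (SbarEmp X) P = (∑ ij : Fin 2 × Fin 2, (1 - μ ij ^ 2)) / N := by
    rw [hSsum]
    rw [IndepFun.variance_sum (μ := P) (X := Y) (s := Finset.univ)
      (fun p _ => hYmem p) (fun p _ q _ hpq => hindepY.indepFun hpq)]
    have h2 : ∀ p : (Fin 2 × Fin 2) × Fin N,
        variance (Y p) P = (1 - μ p.1 ^ 2) / N ^ 2 := by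
      intro p
      rw [hY]
      rw [variance_const_mul (c p.1 / N) (X p.1 p.2) P, hvarX p.1 p.2]
      rw [div_pow, hc2]
      ring
    simp only [h2, Fintype.sum_prod_type, Finset.sum_const, Finset.card_univ, Fintype.card_fin,
      nsmul_eq_mul]
    simp only [← Finset.mul_sum, ← Finset.sum_div]
    rw [pow_two, mul_div_assoc', mul_div_mul_left _ _ hNR.ne']
  have hvarS3 : variance (SbarEmp X) P ≤ 3 / N := by
    rw [hvarS]
    gcongr
    · rw [Fintype.sum_prod_type]
      simp only [Fin.sum_univ_two]
      have h2 := hS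
      simp only [Strue, ge_iff_le] at h2
      nlinarith [sq_nonneg (μ (0,0) - μ (1,0)), sq_nonneg (μ (0,0) - μ (0,1)),
        sq_nonneg (μ (0,0) + μ (1,1)), sq_nonneg (μ (1,0) - μ (0,1)),
        sq_nonneg (μ (1,0) + μ (1,1)), sq_nonneg (μ (0,1) + μ (1,1))]
  -- main Chebyshev bound
  have main : ∀ ε : ℝ, 0 < ε →
      (P {ω | ε < |SbarEmp X ω - Strue μ|}).toReal ≤ 3 / (N * ε ^ 2) := by
    intro ε hε
    have hcheb := meas_ge_le_variance_div_sq hSmem hε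
    have hEr : P[SbarEmp X] = Strue μ := hE
    rw [hEr] at hcheb
    have hsub : {ω | ε < |SbarEmp X ω - Strue μ|} ⊆ {ω | ε ≤ |SbarEmp X ω - Strue μ|} :=
      fun ω hω => le_of_lt (Set.mem_setOf_eq ▸ hω)
    have h3 : P {ω | ε < |SbarEmp X ω - Strue μ|}
        ≤ ENNReal.ofReal (variance (SbarEmp X) P / ε ^ 2) :=
      (measure_mono hsub).trans hcheb
    calc (P {ω | ε < |SbarEmp X ω - Strue μ|}).toReal
        ≤ (ENNReal.ofReal (variance (SbarEmp X) P / ε ^ 2)).toReal :=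
          ENNReal.toReal_mono ENNReal.ofReal_ne_top h3
      _ = variance (SbarEmp X) P / ε ^ 2 :=
          ENNReal.toReal_ofReal (div_nonneg (variance_nonneg _ _) (sq_nonneg _))
      _ ≤ (3 / N) / ε ^ 2 := by gcongr
      _ = 3 / (N * ε ^ 2) := by rw [div_div]
  refine ⟨main, fun ε δ hε hδ hδ1 hNδ => ?_⟩
  refine (main ε hε).trans ?_
  have h4 : (3 : ℝ) ≤ (N : ℝ) * (δ * ε ^ 2) :=
    (div_le_iff₀ (by positivity)).mp hNδ
  rw [div_le_iff₀ (by positivity)]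
  nlinarith
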